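/- Let N be a positive integer, s, σ : Fin N → ℝ strictly positive sorted so that σ[n]/s[n] is nonincreasing in n, and 0 < L < ∑ n, σ[n]. For k ∈ {1,...,N} define c_k = (L − ∑_{n=k+1}^{N} σ[n]) / (∑_{n=1}^{k} s[n]). Then for any i with 2 ≤ i ≤ N: if c_i > σ[i]/s[i], then σ[i]/s[i] < c_{i−1}. -/

import Mathlib

open Finset

theorem stmt4 (N : ℕ) (hN : 0 < N) (s σ : Fin N → ℝ)
    (hs : ∀ n, 0 < s n) (hσ : ∀ n, 0 < σ n)
    (hsort : ∀ m n : Fin N, m ≤ n → σ n / s n ≤ σ m / s m)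
    (L : ℝ) (hL : 0 < L) (hL2 : L < ∑ n, σ n)
    (c : ℕ → ℝ)
    (hc : ∀ k : ℕ, c k = (L - ∑ n ∈ univ.filter (fun n : Fin N => k ≤ (n : ℕ)), σ n) /
                        (∑ n ∈ univ.filter (fun n : Fin N => (n : ℕ) < k), s n)) :
    ∀ i : ℕ, 2 ≤ i → i ≤ N →
      ∀ n : Fin N, (n : ℕ) = i - 1 →
        (σ n / s n < c i → σ n / s n < c (i - 1)) := by
  intro i hi2 hiN n hn hlt
  rw [hc] at hlt ⊢
  set T := ∑ m ∈ univ.filter (fun m : Fin N => i ≤ (m : ℕ)), σ m with hT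
  set B := ∑ m ∈ univ.filter (fun m : Fin N => (m : ℕ) < i - 1), s m with hB
  have hfs : univ.filter (fun m : Fin N => (m : ℕ) < i) =
      insert n (univ.filter (fun m : Fin N => (m : ℕ) < i - 1)) := by
    ext m
    simp only [mem_filter, mem_univ, true_and, mem_insert, Fin.ext_iff, hn]
    omega
  have hfσ : univ.filter (fun m : Fin N => i - 1 ≤ (m : ℕ)) =
      insert n (univ.filter (fun m : Fin N => i ≤ (m : ℕ))) := by
    ext m
    simp only [mem_filter, mem_univ, true_and, mem_insert, Fin.ext_iff, hn]
    omega
  have hnmem : n ∉ univ.filter (fun m : Fin N => (m : ℕ) < i - 1) := by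
    simp [hn]
  have hnmem2 : n ∉ univ.filter (fun m : Fin N => i ≤ (m : ℕ)) := by
    simp [hn]; omega
  have hA : ∑ m ∈ univ.filter (fun m : Fin N => (m : ℕ) < i), s m = s n + B := by
    rw [hfs, Finset.sum_insert hnmem]
  have hTa : ∑ m ∈ univ.filter (fun m : Fin N => i - 1 ≤ (m : ℕ)), σ m = σ n + T := by
    rw [hfσ, Finset.sum_insert hnmem2]
  rw [hA] at hlt
  rw [hTa]
  have hBpos : 0 < B := by
    apply Finset.sum_pos
    · intro m _; exact hs m
    · exact ⟨⟨0, hN⟩, by simp; omega⟩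
  have hsn := hs n
  have hσn := hσ n
  rw [div_lt_div_iff₀ hsn (by linarith)] at hlt
  rw [div_lt_div_iff₀ hsn hBpos]
  nlinarith
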